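/- If (π̄₁, π̄₂) is a Nash equilibrium of the regularized game with utilities 𝒰₁(π₁,π₂) = u(π₁,π₂) - λ₁·KL(π₁‖τ₁) and 𝒰₂(π₁,π₂) = -u(π₁,π₂) - λ₂·KL(π₂‖τ₂), then the exploitability of π̄₁ in the original zero-sum game is at most λ₁β₁: max_{π₁*∈Δ(A₁)} u(π₁*, π̄₂) - u(π̄₁, π̄₂) ≤ λ₁·β₁, where β₁ = max_a log(1/τ₁(a)). -/
import Mathlib



lemma kl_nonneg_fin {A : Type*} [Fintype A] (p τ : A → ℝ)
    (hp0 : ∀ a, 0 ≤ p a) (hτ0 : ∀ a, 0 < τ a)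
    (hp1 : ∑ a, p a = 1) (hτ1 : ∑ a, τ a = 1) :
    0 ≤ ∑ a, p a * Real.log (p a / τ a) := by
  have key : ∀ a, p a - τ a ≤ p a * Real.log (p a / τ a) := by
    intro a
    rcases eq_or_lt_of_le (hp0 a) with h | h
    · simp [← h]
      linarith [(hτ0 a).le]
    · have hx : 0 < τ a / p a := div_pos (hτ0 a) h
      have := Real.log_le_sub_one_of_pos hx
      have hlog : Real.log (τ a / p a) = - Real.log (p a / τ a) := by
        rw [Real.log_div (hτ0 a).ne' h.ne', Real.log_div h.ne' (hτ0 a).ne']; ring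
      rw [hlog] at this
      have h2 : - Real.log (p a / τ a) ≤ τ a / p a - 1 := this
      have h3 : p a * (- Real.log (p a / τ a)) ≤ p a * (τ a / p a - 1) :=
        mul_le_mul_of_nonneg_left h2 h.le
      have h4 : p a * (τ a / p a - 1) = τ a - p a := by
        field_simp
      nlinarith
  calc (0:ℝ) = ∑ a, (p a - τ a) := by rw [Finset.sum_sub_distrib, hp1, hτ1]; ring
    _ ≤ _ := Finset.sum_le_sum fun a _ => key a

theorem stmt8 {A₁ A₂ : Type*} [Fintype A₁] [Fintype A₂] [Nonempty A₁] [Nonempty A₂]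
    (G : A₁ → A₂ → ℝ)
    (τ₁ : A₁ → ℝ) (τ₂ : A₂ → ℝ)
    (hτ₁0 : ∀ a, 0 < τ₁ a) (hτ₂0 : ∀ b, 0 < τ₂ b)
    (hτ₁1 : ∑ a, τ₁ a = 1) (hτ₂1 : ∑ b, τ₂ b = 1)
    (lam₁ lam₂ : ℝ) (hl₁ : 0 ≤ lam₁) (hl₂ : 0 ≤ lam₂)
    (β₁ : ℝ)
    (hβ₁ : β₁ = Finset.univ.sup' Finset.univ_nonempty (fun a => Real.log (1 / τ₁ a)))
    (pbar : A₁ → ℝ) (qbar : A₂ → ℝ)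
    (hp0 : ∀ a, 0 ≤ pbar a) (hp1 : ∑ a, pbar a = 1)
    (hq0 : ∀ b, 0 ≤ qbar b) (hq1 : ∑ b, qbar b = 1)
    (hNash₁ : ∀ p : A₁ → ℝ, (∀ a, 0 ≤ p a) → ∑ a, p a = 1 →
      (∑ a, ∑ b, p a * qbar b * G a b) - lam₁ * ∑ a, p a * Real.log (p a / τ₁ a)
        ≤ (∑ a, ∑ b, pbar a * qbar b * G a b)
            - lam₁ * ∑ a, pbar a * Real.log (pbar a / τ₁ a))
    (hNash₂ : ∀ q : A₂ → ℝ, (∀ b, 0 ≤ q b) → ∑ b, q b = 1 →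
      (-(∑ a, ∑ b, pbar a * q b * G a b)) - lam₂ * ∑ b, q b * Real.log (q b / τ₂ b)
        ≤ (-(∑ a, ∑ b, pbar a * qbar b * G a b))
            - lam₂ * ∑ b, qbar b * Real.log (qbar b / τ₂ b)) :
    ∀ p : A₁ → ℝ, (∀ a, 0 ≤ p a) → ∑ a, p a = 1 →
      (∑ a, ∑ b, p a * qbar b * G a b) - (∑ a, ∑ b, pbar a * qbar b * G a b)
        ≤ lam₁ * β₁ := by
  intro p hpge hpsum
  have hN := hNash₁ p hpge hpsum
  -- upper bound on KL(p)
  have hple1 : ∀ a, p a ≤ 1 := by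
    intro a
    calc p a ≤ ∑ a', p a' := Finset.single_le_sum (fun a' _ => hpge a') (Finset.mem_univ a)
      _ = 1 := hpsum
  have hKLub : ∑ a, p a * Real.log (p a / τ₁ a) ≤ β₁ := by
    have term : ∀ a, p a * Real.log (p a / τ₁ a) ≤ p a * β₁ := by
      intro a
      rcases eq_or_lt_of_le (hpge a) with h | h
      · simp [← h]
      · have hlog : Real.log (p a / τ₁ a) = Real.log (p a) + Real.log (1 / τ₁ a) := by
          rw [Real.log_div h.ne' (hτ₁0 a).ne', Real.log_div one_ne_zero (hτ₁0 a).ne',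
            Real.log_one]; ring
        have h1 : Real.log (p a) ≤ 0 := Real.log_nonpos (hpge a) (hple1 a)
        have h2 : Real.log (1 / τ₁ a) ≤ β₁ := by
          rw [hβ₁]
          exact Finset.le_sup' (fun a => Real.log (1 / τ₁ a)) (Finset.mem_univ a)
        rw [hlog]
        nlinarith
    calc ∑ a, p a * Real.log (p a / τ₁ a) ≤ ∑ a, p a * β₁ :=
          Finset.sum_le_sum fun a _ => term a
      _ = β₁ := by rw [← Finset.sum_mul, hpsum, one_mul]
  have hKLbar : 0 ≤ ∑ a, pbar a * Real.log (pbar a / τ₁ a) :=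
    kl_nonneg_fin pbar τ₁ hp0 hτ₁0 hp1 hτ₁1
  nlinarith [mul_le_mul_of_nonneg_left hKLub hl₁, mul_le_mul_of_nonneg_left hKLbar hl₁]
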